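/- Let (V,R) = ⊕_{s=1}^k (V_s, R_{φ_s}) with each φ_s nondegenerate of signature (p_s,q_s). If A ∈ G_R maps Vᵢ onto Vⱼ and rank φᵢ ≥ 3, then the signature (pᵢ,qᵢ) equals (pⱼ,qⱼ) or (qⱼ,pⱼ). -/

import Mathlib

/-- The canonical algebraic curvature tensor built from a symmetric bilinear form. -/

lemma bilin_diag_expand {W : Type*} [AddCommGroup W] [Module ℝ W]
    (B : LinearMap.BilinForm ℝ W) {n : ℕ}
    (f : Module.Basis (Fin n) ℝ W) (η : Fin n → ℝ)
    (hf : ∀ a b, B (f a) (f b) = if a = b then η a else 0) (v : W) :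
    B v v = ∑ a, (f.repr v a) * (f.repr v a) * η a := by
  conv_lhs => rw [← f.sum_repr v]
  rw [map_sum]
  refine Finset.sum_congr rfl fun a _ => ?_
  simp only [map_sum, map_smul, LinearMap.sum_apply, LinearMap.smul_apply, smul_eq_mul, hf,
    mul_ite, mul_zero, Finset.sum_ite_eq, Finset.sum_ite_eq', Finset.mem_univ, if_true]
  ring

lemma inertia_le {W : Type*} [AddCommGroup W] [Module ℝ W] [FiniteDimensional ℝ W]
    (B : LinearMap.BilinForm ℝ W)
    {n m : ℕ} (f : Module.Basis (Fin n) ℝ W) (η : Fin n → ℝ) (hη : ∀ a, η a = 1 ∨ η a = -1)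
    (hf : ∀ a b, B (f a) (f b) = if a = b then η a else 0)
    (g : Module.Basis (Fin m) ℝ W) (θ : Fin m → ℝ) (hθ : ∀ a, θ a = 1 ∨ θ a = -1)
    (hg : ∀ a b, B (g a) (g b) = if a = b then θ a else 0) :
    (Finset.univ.filter fun a => η a = 1).card ≤ (Finset.univ.filter fun a => θ a = 1).card := by
  classical
  set S : Set (Fin n) := {a | η a = 1} with hS
  set T : Set (Fin m) := {a | θ a = -1} with hT
  set P : Submodule ℝ W := Submodule.span ℝ (f '' S) with hP
  set N : Submodule ℝ W := Submodule.span ℝ (g '' T) with hN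
  have hpos : ∀ v ∈ P, v ≠ 0 → 0 < B v v := by
    intro v hv hv0
    rw [bilin_diag_expand B f η hf v]
    have hsupp : ↑(f.repr v).support ⊆ S := f.mem_span_image.1 hv
    have hex : ∃ a, f.repr v a ≠ 0 := by
      by_contra h
      push_neg at h
      exact hv0 (by simpa using congrArg f.repr.symm (Finsupp.ext h : f.repr v = 0))
    obtain ⟨a₀, ha₀⟩ := hex
    apply Finset.sum_pos'
    · intro a _
      by_cases h : f.repr v a = 0
      · simp [h]
      · have hmem : η a = 1 := hsupp (Finsupp.mem_support_iff.2 h)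
        rw [hmem, mul_one]; exact mul_self_nonneg _
    · refine ⟨a₀, Finset.mem_univ _, ?_⟩
      have hmem : η a₀ = 1 := hsupp (Finsupp.mem_support_iff.2 ha₀)
      rw [hmem, mul_one]
      exact mul_self_pos.2 ha₀
  have hneg : ∀ v ∈ N, B v v ≤ 0 := by
    intro v hv
    rw [bilin_diag_expand B g θ hg v]
    have hsupp : ↑(g.repr v).support ⊆ T := g.mem_span_image.1 hv
    apply Finset.sum_nonpos
    intro a _
    by_cases h : g.repr v a = 0
    · simp [h]
    · have hmem : θ a = -1 := hsupp (Finsupp.mem_support_iff.2 h)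
      rw [hmem]
      nlinarith [mul_self_nonneg (g.repr v a)]
  have hdisj : P ⊓ N = ⊥ := by
    rw [Submodule.eq_bot_iff]
    rintro v ⟨hvP, hvN⟩
    by_contra hv0
    exact absurd (hneg v hvN) (not_le.2 (hpos v hvP hv0))
  have hliP : LinearIndependent ℝ (fun a : S => f a) :=
    f.linearIndependent.comp Subtype.val Subtype.val_injective
  have hliN : LinearIndependent ℝ (fun a : T => g a) :=
    g.linearIndependent.comp Subtype.val Subtype.val_injective
  have hfinP : Module.finrank ℝ P = Fintype.card S := by
    rw [hP, Set.image_eq_range]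
    exact finrank_span_eq_card hliP
  have hfinN : Module.finrank ℝ N = Fintype.card T := by
    rw [hN, Set.image_eq_range]
    exact finrank_span_eq_card hliN
  have hcardS : Fintype.card S = (Finset.univ.filter fun a => η a = 1).card :=
    Fintype.card_subtype _
  have hcardT : Fintype.card T = (Finset.univ.filter fun a => θ a = -1).card :=
    Fintype.card_subtype _
  have hsum := Submodule.finrank_sup_add_finrank_inf_eq P N
  rw [hdisj, finrank_bot] at hsum
  have hle : Module.finrank ℝ P + Module.finrank ℝ N ≤ Module.finrank ℝ W := by
    rw [← hsum, add_zero]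
    exact Submodule.finrank_le _
  have hm : Module.finrank ℝ W = m := by
    rw [Module.finrank_eq_card_basis g, Fintype.card_fin]
  have hpart : (Finset.univ.filter fun a => θ a = 1).card +
      (Finset.univ.filter fun a => θ a = -1).card = m := by
    have heq : (Finset.univ.filter fun a => θ a = -1) =
        (Finset.univ.filter fun a => ¬ θ a = 1) := by
      ext a
      simp only [Finset.mem_filter, Finset.mem_univ, true_and]
      constructor
      · intro h h'; rw [h'] at h; norm_num at h
      · intro h; rcases hθ a with h' | h' <;> [exact absurd h' h; exact h']
    rw [heq, Finset.card_filter_add_card_filter_not, Finset.card_univ, Fintype.card_fin]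
  have hP' : Module.finrank ℝ P = (Finset.univ.filter fun a => η a = 1).card :=
    hfinP.trans ((Fintype.card_congr (Equiv.refl _)).trans (Fintype.card_subtype _))
  have hN' : Module.finrank ℝ N = (Finset.univ.filter fun a => θ a = -1).card :=
    hfinN.trans ((Fintype.card_congr (Equiv.refl _)).trans (Fintype.card_subtype _))
  rw [hP', hN', hm] at hle
  omega

/-- The canonical algebraic curvature tensor built from a symmetric bilinear form. -/
def canACT {V : Type*} [AddCommGroup V] [Module ℝ V]
    (φ : LinearMap.BilinForm ℝ V) (x y z w : V) : ℝ :=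
  φ x w * φ y z - φ x z * φ y w

theorem stmt13 {V : Type*} [AddCommGroup V] [Module ℝ V] [FiniteDimensional ℝ V]
    (k : ℕ) (Vs : Fin k → Submodule ℝ V) (hint : DirectSum.IsInternal Vs)
    (φs : Fin k → LinearMap.BilinForm ℝ V)
    (hsymm : ∀ s, ∀ x y : V, φs s x y = φs s y x)
    (hnd : ∀ s, ∀ v ∈ Vs s, (∀ w ∈ Vs s, φs s v w = 0) → v = 0)
    (R : V →ₗ[ℝ] V →ₗ[ℝ] V →ₗ[ℝ] V →ₗ[ℝ] ℝ)
    (hRs : ∀ s, ∀ x ∈ Vs s, ∀ y ∈ Vs s, ∀ z ∈ Vs s, ∀ w ∈ Vs s,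
      R x y z w = canACT (φs s) x y z w)
    (hmix : ∀ x y z w : V, ∀ sx sy sz sw : Fin k,
      x ∈ Vs sx → y ∈ Vs sy → z ∈ Vs sz → w ∈ Vs sw →
      ¬(sx = sy ∧ sy = sz ∧ sz = sw) → R x y z w = 0)
    (A : V ≃ₗ[ℝ] V)
    (hA : ∀ x y z w : V, R (A x) (A y) (A z) (A w) = R x y z w)
    (i j : Fin k)
    (hAij : Submodule.map (A : V →ₗ[ℝ] V) (Vs i) = Vs j)
    -- rank φ_i ≥ 3:
    (hrank : 3 ≤ Module.finrank ℝ (Vs i))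
    -- orthonormal bases realizing the signatures (p_i, q_i) and (p_j, q_j):
    (ni nj : ℕ)
    (ei : Module.Basis (Fin ni) ℝ (Vs i)) (εi : Fin ni → ℝ)
    (hεi : ∀ a, εi a = 1 ∨ εi a = -1)
    (horthi : ∀ a b, φs i (ei a : V) (ei b : V) = if a = b then εi a else 0)
    (ej : Module.Basis (Fin nj) ℝ (Vs j)) (εj : Fin nj → ℝ)
    (hεj : ∀ a, εj a = 1 ∨ εj a = -1)
    (horthj : ∀ a b, φs j (ej a : V) (ej b : V) = if a = b then εj a else 0) :
    ((Finset.univ.filter fun a => εi a = 1).card =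
        (Finset.univ.filter fun a => εj a = 1).card ∧
      (Finset.univ.filter fun a => εi a = -1).card =
        (Finset.univ.filter fun a => εj a = -1).card) ∨
    ((Finset.univ.filter fun a => εi a = 1).card =
        (Finset.univ.filter fun a => εj a = -1).card ∧
      (Finset.univ.filter fun a => εi a = -1).card =
        (Finset.univ.filter fun a => εj a = 1).card) := by
  classical
  -- A maps Vs i into Vs j
  have hmemj : ∀ x ∈ Vs i, A x ∈ Vs j := by
    intro x hx
    rw [← hAij]
    exact ⟨x, hx, rfl⟩
  -- ni ≥ 3
  have hni : 3 ≤ ni := by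
    have := Module.finrank_eq_card_basis ei
    rw [Fintype.card_fin] at this
    omega
  -- the pulled-back form on the basis of Vs i
  set Ψ : Fin ni → Fin ni → ℝ := fun a b => φs j (A (ei a)) (A (ei b)) with hΨdef
  have hsym : ∀ a b, Ψ b a = Ψ a b := fun a b => hsymm j _ _
  have key : ∀ a b c d, Ψ a d * Ψ b c - Ψ a c * Ψ b d =
      (if a = d then εi a else 0) * (if b = c then εi b else 0) -
      (if a = c then εi a else 0) * (if b = d then εi b else 0) := by
    intro a b c d
    have h1 := hRs i (ei a) (ei a).2 (ei b) (ei b).2 (ei c) (ei c).2 (ei d) (ei d).2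
    have h2 := hRs j (A (ei a)) (hmemj _ (ei a).2) (A (ei b)) (hmemj _ (ei b).2)
      (A (ei c)) (hmemj _ (ei c).2) (A (ei d)) (hmemj _ (ei d).2)
    have h3 := hA (ei a) (ei b) (ei c) (ei d)
    rw [h1, h2] at h3
    unfold canACT at h3
    rw [h3, horthi, horthi, horthi, horthi]
  have hε0 : ∀ a, εi a ≠ 0 := by
    intro a; rcases hεi a with h | h <;> rw [h] <;> norm_num
  have hε2 : ∀ a, εi a * εi a = 1 := by
    intro a; rcases hεi a with h | h <;> rw [h] <;> norm_num
  have hex : ∀ a b : Fin ni, ∃ c, c ≠ a ∧ c ≠ b := by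
    intro a b
    by_contra h
    push_neg at h
    have hsub : (Finset.univ : Finset (Fin ni)) ⊆ {a, b} := by
      intro c _
      by_cases hc : c = a
      · simp [hc]
      · simp [h c hc]
    have := Finset.card_le_card hsub
    have h2 := Finset.card_insert_le a ({b} : Finset (Fin ni))
    rw [Finset.card_univ, Fintype.card_fin] at this
    simp at h2
    omega
  have h1 : ∀ a b, a ≠ b → Ψ a a * Ψ b b - Ψ a b * Ψ a b = εi a * εi b := by
    intro a b hab
    have H := key a b b a
    rw [if_pos rfl, if_pos rfl, if_neg hab, if_neg (Ne.symm hab), hsym a b] at H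
    rw [H]; ring
  have h2 : ∀ a b c, a ≠ b → a ≠ c → b ≠ c → Ψ a a * Ψ b c = Ψ a c * Ψ a b := by
    intro a b c hab hac hbc
    have H := key a b c a
    rw [if_pos rfl, if_neg hbc, if_neg hac, if_neg (Ne.symm hab), hsym a b] at H
    have : Ψ a a * Ψ b c - Ψ a c * Ψ a b = 0 := by rw [H]; ring
    linarith
  -- diagonal entries are nonzero
  have hd : ∀ a, Ψ a a ≠ 0 := by
    intro a ha0
    obtain ⟨b, hba, -⟩ := hex a a
    obtain ⟨c, hca, hcb⟩ := hex a b
    have e1 := h1 a b (Ne.symm hba)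
    have e2 := h1 a c (Ne.symm hca)
    have e3 := h2 a b c (Ne.symm hba) (Ne.symm hca) (Ne.symm hcb)
    rw [ha0, zero_mul] at e1 e2 e3
    rw [zero_sub] at e1 e2
    have hab0 : Ψ a b ≠ 0 := by
      intro h; rw [h] at e1; rcases hεi a with h' | h' <;> rcases hεi b with h'' | h'' <;>
        rw [h', h''] at e1 <;> norm_num at e1
    have hac0 : Ψ a c ≠ 0 := by
      intro h; rw [h] at e2; rcases hεi a with h' | h' <;> rcases hεi c with h'' | h'' <;>
        rw [h', h''] at e2 <;> norm_num at e2
    exact mul_ne_zero hac0 hab0 e3.symm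
  -- off-diagonal entries vanish
  have hoff : ∀ a b, a ≠ b → Ψ a b = 0 := by
    intro a b hab
    obtain ⟨c, hca, hcb⟩ := hex a b
    have hprod0 : Ψ a c * Ψ b c = 0 := by
      by_contra hne
      have e2a := h2 a b c hab (Ne.symm hca) (Ne.symm hcb)
      have e2b := h2 b a c (Ne.symm hab) (Ne.symm hcb) (Ne.symm hca)
      rw [hsym a b] at e2b
      have hm : (Ψ a a * Ψ b b) * (Ψ a c * Ψ b c) = (Ψ a b * Ψ a b) * (Ψ a c * Ψ b c) := by
        have : (Ψ a a * Ψ b c) * (Ψ b b * Ψ a c) = (Ψ a c * Ψ a b) * (Ψ b c * Ψ a b) := by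
          rw [e2a, e2b]
        nlinarith [this]
      have hcan := mul_right_cancel₀ hne hm
      have := h1 a b hab
      rw [hcan, sub_self] at this
      rcases hεi a with h' | h' <;> rcases hεi b with h'' | h'' <;>
        rw [h', h''] at this <;> norm_num at this
    rcases mul_eq_zero.1 hprod0 with h0 | h0
    · have H := h2 c b a hcb hca (Ne.symm hab)
      rw [← hsym c a, h0, zero_mul] at H
      have := mul_eq_zero.1 H
      rcases this with h' | h'
      · exact absurd h' (hd c)
      · rw [← hsym a b]; exact h'
    · have H := h2 c a b hca hcb hab
      rw [← hsym c b, h0, zero_mul] at H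
      rcases mul_eq_zero.1 H with h' | h'
      · exact absurd h' (hd c)
      · exact h'
  -- the diagonal is a constant sign times εi
  obtain ⟨a₀, b₀, c₀, hab₀, hac₀, hbc₀⟩ : ∃ a b c : Fin ni, a ≠ b ∧ a ≠ c ∧ b ≠ c := by
    refine ⟨⟨0, by omega⟩, ⟨1, by omega⟩, ⟨2, by omega⟩, ?_, ?_, ?_⟩ <;>
      simp [Fin.ext_iff]
  have hr : ∀ a b, a ≠ b → (Ψ a a * εi a) * (Ψ b b * εi b) = 1 := by
    intro a b hab
    have e1 := h1 a b hab
    rw [hoff a b hab, mul_zero, sub_zero] at e1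
    calc (Ψ a a * εi a) * (Ψ b b * εi b) = (Ψ a a * Ψ b b) * (εi a * εi b) := by ring
      _ = (εi a * εi b) * (εi a * εi b) := by rw [e1]
      _ = (εi a * εi a) * (εi b * εi b) := by ring
      _ = 1 := by rw [hε2, hε2, mul_one]
  set σ : ℝ := Ψ a₀ a₀ * εi a₀ with hσdef
  have hσ2 : σ * σ = 1 := by
    have hab := hr a₀ b₀ hab₀
    have hac := hr a₀ c₀ hac₀
    have hbc := hr b₀ c₀ hbc₀
    calc σ * σ = σ * σ * ((Ψ b₀ b₀ * εi b₀) * (Ψ c₀ c₀ * εi c₀)) := by rw [hbc, mul_one]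
      _ = ((Ψ a₀ a₀ * εi a₀) * (Ψ b₀ b₀ * εi b₀)) *
          ((Ψ a₀ a₀ * εi a₀) * (Ψ c₀ c₀ * εi c₀)) := by rw [hσdef]; ring
      _ = 1 := by rw [hab, hac, mul_one]
  have hσ : σ = 1 ∨ σ = -1 := mul_self_eq_one_iff.1 hσ2
  have hdiag : ∀ a, Ψ a a = σ * εi a := by
    intro a
    by_cases ha : a = a₀
    · subst ha
      rw [hσdef, mul_assoc, hε2, mul_one]
    · have h := hr a a₀ ha
      rw [← hσdef] at h
      have hra : Ψ a a * εi a = σ := by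
        calc Ψ a a * εi a = (Ψ a a * εi a) * (σ * σ) := by rw [hσ2, mul_one]
          _ = ((Ψ a a * εi a) * σ) * σ := by ring
          _ = σ := by rw [h, one_mul]
      calc Ψ a a = Ψ a a * (εi a * εi a) := by rw [hε2, mul_one]
        _ = (Ψ a a * εi a) * εi a := by ring
        _ = σ * εi a := by rw [hra]
  have hΨ : ∀ a b, Ψ a b = if a = b then σ * εi a else 0 := by
    intro a b
    by_cases hab : a = b
    · subst hab; rw [if_pos rfl]; exact hdiag a
    · rw [if_neg hab]; exact hoff a b hab
  -- transport the basis of Vs i to Vs j via A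
  set f : Module.Basis (Fin ni) ℝ (Vs j) :=
    ei.map (LinearEquiv.ofSubmodules A (Vs i) (Vs j) hAij) with hfdef
  have hfa : ∀ a, (f a : V) = A (ei a) := by
    intro a
    simp [hfdef]
  set η : Fin ni → ℝ := fun a => σ * εi a with hηdef
  have hη : ∀ a, η a = 1 ∨ η a = -1 := by
    intro a
    rcases hσ with h | h <;> rcases hεi a with h' | h' <;>
      rw [hηdef] <;> simp only [h, h'] <;> norm_num
  set B : LinearMap.BilinForm ℝ (Vs j) := (φs j).restrict (Vs j) with hBdef
  have hBf : ∀ a b, B (f a) (f b) = if a = b then η a else 0 := by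
    intro a b
    simpa [hBdef, LinearMap.BilinForm.restrict_apply, hfa] using hΨ a b
  have hBg : ∀ a b, B (ej a) (ej b) = if a = b then εj a else 0 := by
    intro a b
    simpa [hBdef, LinearMap.BilinForm.restrict_apply] using horthj a b
  -- Sylvester's law of inertia
  have c1 := inertia_le B f η hη hBf ej εj hεj hBg
  have c2 := inertia_le B ej εj hεj hBg f η hη hBf
  have ceq : (Finset.univ.filter fun a => η a = 1).card =
      (Finset.univ.filter fun a => εj a = 1).card := le_antisymm c1 c2
  -- counting
  have hpart : ∀ {N : ℕ} (ε : Fin N → ℝ), (∀ a, ε a = 1 ∨ ε a = -1) →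
      (Finset.univ.filter fun a => ε a = 1).card +
      (Finset.univ.filter fun a => ε a = -1).card = N := by
    intro N ε hε
    have heq : (Finset.univ.filter fun a => ε a = -1) =
        (Finset.univ.filter fun a => ¬ ε a = 1) := by
      ext a
      simp only [Finset.mem_filter, Finset.mem_univ, true_and]
      constructor
      · intro h h'; rw [h'] at h; norm_num at h
      · intro h; rcases hε a with h' | h' <;> [exact absurd h' h; exact h']
    rw [heq, Finset.card_filter_add_card_filter_not, Finset.card_univ, Fintype.card_fin]
  have hninj : ni = nj := by
    have hfi := Module.finrank_eq_card_basis f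
    have hfj := Module.finrank_eq_card_basis ej
    rw [Fintype.card_fin] at hfi hfj
    omega
  have hpi := hpart εi hεi
  have hpj := hpart εj hεj
  have hpη := hpart η hη
  rcases hσ with h | h
  · left
    have hfeq1 : (Finset.univ.filter fun a => η a = 1) =
        (Finset.univ.filter fun a => εi a = 1) := by
      apply Finset.filter_congr
      intro a _
      rw [hηdef]; simp only [h, one_mul]
    have hfeqm : (Finset.univ.filter fun a => η a = -1) =
        (Finset.univ.filter fun a => εi a = -1) := by
      apply Finset.filter_congr
      intro a _
      rw [hηdef]; simp only [h, one_mul]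
    rw [hfeq1] at ceq
    rw [hfeq1, hfeqm] at hpη
    exact ⟨ceq, by omega⟩
  · right
    have hfeq1 : (Finset.univ.filter fun a => η a = 1) =
        (Finset.univ.filter fun a => εi a = -1) := by
      apply Finset.filter_congr
      intro a _
      rw [hηdef]; simp only [h]
      constructor <;> intro h'' <;> linarith
    have hfeqm : (Finset.univ.filter fun a => η a = -1) =
        (Finset.univ.filter fun a => εi a = 1) := by
      apply Finset.filter_congr
      intro a _
      rw [hηdef]; simp only [h]
      constructor <;> intro h'' <;> linarith
    rw [hfeq1] at ceq
    rw [hfeq1, hfeqm] at hpη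
    refine ⟨by omega, ceq.symm ▸ ?_⟩
    omega
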